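/- arXiv:1610.06784 — 4 statements merged into one kernel-verified Lean document; each statement's English description precedes it below -/
import Mathlib

section
/- Let L(X) = AX + XB be an invertible Sylvester operator on ℂ^{n×m}, let W_k: ℂ^{n×m} → ℂ be linear functionals and E_k ∈ ℂ^{n×m} for k = 1,...,N, and define Π(X) := Σ_{k=1}^N W_k(X) E_k. Let F_k := L^{-1}(E_k), G := L^{-1}(C), let W ∈ ℂ^{N×N} have entries W_{jk} = δ_{jk} + W_j(F_k), and g ∈ ℂ^N have entries g_j = W_j(G). If W is invertible with W a = g, then X := L^{-1}(C - Σ_{k=1}^N a_k E_k) satisfies L(X) + Π(X) = C. -/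
open Matrix

/-- Sylvester-type SMW structure (Theorem 4.1): if W a = g then
X = L⁻¹(C - Σ aₖ Eₖ) solves L(X) + Π(X) = C. Here `Linv` is the inverse of the
invertible Sylvester operator L(X) = AX + XB. -/
theorem sylvester_smw (n m N : ℕ)
    (A : Matrix (Fin n) (Fin n) ℂ) (B : Matrix (Fin m) (Fin m) ℂ)
    (Linv : Matrix (Fin n) (Fin m) ℂ →ₗ[ℂ] Matrix (Fin n) (Fin m) ℂ)
    (hinv : ∀ Y : Matrix (Fin n) (Fin m) ℂ, A * Linv Y + Linv Y * B = Y)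
    (Wf : Fin N → (Matrix (Fin n) (Fin m) ℂ →ₗ[ℂ] ℂ))
    (E : Fin N → Matrix (Fin n) (Fin m) ℂ)
    (C : Matrix (Fin n) (Fin m) ℂ)
    (Wmat : Matrix (Fin N) (Fin N) ℂ)
    (hWmat : ∀ j k, Wmat j k = (if j = k then (1 : ℂ) else 0) + Wf j (Linv (E k)))
    (hWu : IsUnit Wmat)
    (a : Fin N → ℂ)
    (ha : Wmat *ᵥ a = fun j => Wf j (Linv C)) :
    A * Linv (C - ∑ k, a k • E k) + Linv (C - ∑ k, a k • E k) * B +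
      ∑ k, Wf k (Linv (C - ∑ j, a j • E j)) • E k = C := by
  have hcoef : ∀ k, Wf k (Linv (C - ∑ j, a j • E j)) = a k := by
    intro k
    have hk := congrFun ha k
    simp only [Matrix.mulVec, dotProduct] at hk
    have hk' : ∑ j, ((if k = j then (1:ℂ) else 0) + Wf k (Linv (E j))) * a j
        = Wf k (Linv C) := by
      rw [← hk]; exact Finset.sum_congr rfl fun j _ => by rw [hWmat]
    simp only [add_mul, ite_mul, one_mul, zero_mul, Finset.sum_add_distrib,
      Finset.sum_ite_eq, Finset.mem_univ, if_true] at hk'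
    have : Wf k (Linv (C - ∑ j, a j • E j))
        = Wf k (Linv C) - ∑ j, a j * Wf k (Linv (E j)) := by
      simp [map_sum, _root_.map_smul, smul_eq_mul]
    rw [this, ← hk']
    ring_nf
    rw [Finset.sum_congr rfl fun j _ => mul_comm (Wf k (Linv (E j))) (a j)]
    ring
  have h1 := hinv (C - ∑ k, a k • E k)
  calc A * Linv (C - ∑ k, a k • E k) + Linv (C - ∑ k, a k • E k) * B +
        ∑ k, Wf k (Linv (C - ∑ j, a j • E j)) • E k
      = (C - ∑ k, a k • E k) + ∑ k, a k • E k := by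
        rw [h1]; congr 1; exact Finset.sum_congr rfl fun k _ => by rw [hcoef]
    _ = C := by simp
end

section
/- In the setting of the Sylvester-type SMW theorem, if the operator L + Π on ℂ^{n×m} is invertible (has a unique solution for every right-hand side), then the N×N matrix W with entries W_{jk} = δ_{jk} + W_j(L^{-1}(E_k)) is invertible. -/
open Matrix

/-- If the operator L + Π is invertible, then the SMW matrix W is invertible. -/
theorem sylvester_smw_W_invertible (n m N : ℕ)
    (A : Matrix (Fin n) (Fin n) ℂ) (B : Matrix (Fin m) (Fin m) ℂ)
    (Linv : Matrix (Fin n) (Fin m) ℂ →ₗ[ℂ] Matrix (Fin n) (Fin m) ℂ)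
    (hinv₁ : ∀ Y : Matrix (Fin n) (Fin m) ℂ, A * Linv Y + Linv Y * B = Y)
    (hinv₂ : ∀ X : Matrix (Fin n) (Fin m) ℂ, Linv (A * X + X * B) = X)
    (Wf : Fin N → (Matrix (Fin n) (Fin m) ℂ →ₗ[ℂ] ℂ))
    (E : Fin N → Matrix (Fin n) (Fin m) ℂ)
    (Wmat : Matrix (Fin N) (Fin N) ℂ)
    (hWmat : ∀ j k, Wmat j k = (if j = k then (1 : ℂ) else 0) + Wf j (Linv (E k)))
    (hLPi : ∀ C : Matrix (Fin n) (Fin m) ℂ,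
      ∃! X : Matrix (Fin n) (Fin m) ℂ, A * X + X * B + ∑ k, Wf k X • E k = C) :
    IsUnit Wmat := by
  rw [Matrix.isUnit_iff_isUnit_det, isUnit_iff_ne_zero]
  intro hdet
  obtain ⟨v, hv, hmv⟩ := (Matrix.exists_mulVec_eq_zero_iff).mpr hdet
  set X : Matrix (Fin n) (Fin m) ℂ := ∑ k, v k • Linv (E k) with hX
  have hmv' : ∀ j, v j + Wf j X = 0 := by
    intro j
    have := congrFun hmv j
    simp only [Matrix.mulVec, dotProduct, hWmat, Pi.zero_apply] at this
    calc v j + Wf j X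
        = ∑ k, ((if j = k then (1:ℂ) else 0) + Wf j (Linv (E k))) * v k := by
          rw [hX]
          simp only [map_sum, _root_.map_smul, smul_eq_mul, add_mul, ite_mul, one_mul,
            zero_mul, Finset.sum_add_distrib, Finset.sum_ite_eq, Finset.mem_univ, if_true]
          simp [mul_comm]
      _ = 0 := this
  have hX0 : X = 0 := by
    obtain ⟨Y, hY, huniq⟩ := hLPi 0
    have h1 : A * X + X * B + ∑ k, Wf k X • E k = 0 := by
      have hAXB : A * X + X * B = ∑ k, v k • E k := by
        have : X = Linv (∑ k, v k • E k) := by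
          rw [hX, map_sum]; simp only [_root_.map_smul]
        rw [this, hinv₁]
      rw [hAXB]
      have : ∀ k, Wf k X • E k = -(v k • E k) := by
        intro k
        have := hmv' k
        have hw : Wf k X = -v k := eq_neg_of_add_eq_zero_right (hmv' k)
        rw [hw, neg_smul]
      rw [Finset.sum_congr rfl fun k _ => this k, Finset.sum_neg_distrib]
      exact add_neg_cancel _
    have h2 : A * (0 : Matrix (Fin n) (Fin m) ℂ) + (0 : Matrix (Fin n) (Fin m) ℂ) * B
        + ∑ k, Wf k (0 : Matrix (Fin n) (Fin m) ℂ) • E k = 0 := by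
      simp
    rw [huniq X h1]
    exact (huniq 0 h2).symm
  apply hv
  funext j
  have := hmv' j
  rw [hX0] at this
  simpa using this
end

section
/- Let S = Q - C₁ P^{-1} C₂^T with Q vec(X) = vec(AX + XB + K ∘ X) for A = D_zz + 2σD_z + σ²I, B = D_xx, and C₁P^{-1}C₂^T as in the waveguide structure. Then for any k̄ ∈ ℂ, S vec(X) = vec(C) holds if and only if (A + k̄I)X + XB + (K - k̄𝟙𝟙^T) ∘ X - P₋^{-1} X E - P₊^{-1} X J E J = C, where E = (1/h²)(d₁e₁ + d₂e₂)e₁^T and J is the flipped identity. -/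
open Matrix

/-- Vectorization: stack the columns of a matrix on top of each other. -/
def vecOf {nz nx : ℕ} (X : Matrix (Fin nz) (Fin nx) ℂ) : Fin nx × Fin nz → ℂ :=
  fun p => X p.2 p.1

/-- The waveguide matrix equation (Proposition 3.1): S vec(X) = vec(C) iff
(A + kbar I)X + XB + (K - kbar𝟙𝟙ᵀ)∘X - P₋⁻¹ X E - P₊⁻¹ X J E J = C. -/
theorem waveguide_matrix_equation (nz nx : ℕ) (hx : 2 ≤ nx)
    (σ kbar h d₁ d₂ : ℂ) (hh : h ≠ 0)
    (Dzz Dz : Matrix (Fin nz) (Fin nz) ℂ) (Dxx : Matrix (Fin nx) (Fin nx) ℂ)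
    (K : Matrix (Fin nz) (Fin nx) ℂ)
    (Pm Pp : Matrix (Fin nz) (Fin nz) ℂ) (hPm : IsUnit Pm) (hPp : IsUnit Pp)
    -- Q is the matrix whose action is vec(X) ↦ vec((D_zz + 2σD_z + σ²I)X + XD_xx + K∘X)
    (Qmat : Matrix (Fin nx × Fin nz) (Fin nx × Fin nz) ℂ)
    (hQ : ∀ X : Matrix (Fin nz) (Fin nx) ℂ,
      Qmat *ᵥ vecOf X =
        vecOf ((Dzz + (2 * σ) • Dz + σ ^ 2 • (1 : Matrix (Fin nz) (Fin nz) ℂ)) * X +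
          X * Dxx + Matrix.hadamard K X))
    -- C₁ = (1/h²)(e₁ ⊗ Iₙ, e_{nx} ⊗ Iₙ)
    (C₁ : Matrix (Fin nx × Fin nz) (Fin nz ⊕ Fin nz) ℂ)
    (hC₁ : C₁ = Matrix.of fun (p : Fin nx × Fin nz) (s : Fin nz ⊕ Fin nz) =>
        (1 / h ^ 2) * Sum.elim
          (fun j => (if p.1 = (⟨0, by omega⟩ : Fin nx) then (1 : ℂ) else 0) *
            (if p.2 = j then 1 else 0))
          (fun j => (if p.1 = (⟨nx - 1, by omega⟩ : Fin nx) then (1 : ℂ) else 0) *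
            (if p.2 = j then 1 else 0)) s)
    -- C₂ᵀ = [d₁ e₁ᵀ ⊗ Iₙ + d₂ e₂ᵀ ⊗ Iₙ ; d₁ e_{nx}ᵀ ⊗ Iₙ + d₂ e_{nx-1}ᵀ ⊗ Iₙ]
    (C₂t : Matrix (Fin nz ⊕ Fin nz) (Fin nx × Fin nz) ℂ)
    (hC₂t : C₂t = Matrix.of fun (s : Fin nz ⊕ Fin nz) (p : Fin nx × Fin nz) =>
        Sum.elim
          (fun j => d₁ * (if p.1 = (⟨0, by omega⟩ : Fin nx) then (1 : ℂ) else 0) *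
              (if j = p.2 then 1 else 0) +
            d₂ * (if p.1 = (⟨1, by omega⟩ : Fin nx) then (1 : ℂ) else 0) *
              (if j = p.2 then 1 else 0))
          (fun j => d₁ * (if p.1 = (⟨nx - 1, by omega⟩ : Fin nx) then (1 : ℂ) else 0) *
              (if j = p.2 then 1 else 0) +
            d₂ * (if p.1 = (⟨nx - 2, by omega⟩ : Fin nx) then (1 : ℂ) else 0) *
              (if j = p.2 then 1 else 0)) s)
    -- E = (1/h²)(d₁e₁ + d₂e₂)e₁ᵀ
    (E : Matrix (Fin nx) (Fin nx) ℂ)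
    (hE : E = Matrix.of fun (r c : Fin nx) =>
        (1 / h ^ 2) * ((d₁ * (if r = (⟨0, by omega⟩ : Fin nx) then (1 : ℂ) else 0) +
          d₂ * (if r = (⟨1, by omega⟩ : Fin nx) then (1 : ℂ) else 0)) *
          (if c = (⟨0, by omega⟩ : Fin nx) then (1 : ℂ) else 0)))
    -- J is the flipped identity
    (J : Matrix (Fin nx) (Fin nx) ℂ)
    (hJ : J = Matrix.of fun (k l : Fin nx) =>
        if (k : ℕ) + (l : ℕ) + 1 = nx then (1 : ℂ) else 0)
    (X C : Matrix (Fin nz) (Fin nx) ℂ) :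
    (Qmat - C₁ * Matrix.fromBlocks Pm⁻¹ 0 0 Pp⁻¹ * C₂t) *ᵥ vecOf X = vecOf C ↔
      (Dzz + (2 * σ) • Dz + (σ ^ 2 + kbar) • (1 : Matrix (Fin nz) (Fin nz) ℂ)) * X +
        X * Dxx +
        Matrix.hadamard (K - kbar • Matrix.of fun _ _ => (1 : ℂ)) X -
        Pm⁻¹ * X * E - Pp⁻¹ * X * (J * E * J) = C := by
  have hkey : (C₁ * Matrix.fromBlocks Pm⁻¹ 0 0 Pp⁻¹ * C₂t) *ᵥ vecOf X =
      vecOf (Pm⁻¹ * X * E + Pp⁻¹ * X * (J * E * J)) := by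
    -- closed form of J*E*J
    have hrev : ∀ (r a : Fin nx), ((r:ℕ)+(a:ℕ)+1 = nx) ↔ a = Fin.rev r := by
      intro r a; rw [Fin.ext_iff, Fin.val_rev]; omega
    have hJM : ∀ (M : Matrix (Fin nx) (Fin nx) ℂ) (r c : Fin nx),
        (J * M) r c = M (Fin.rev r) c := by
      intro M r c
      simp [hJ, mul_apply, hrev, ite_mul]
    have hrev2 : ∀ (a c : Fin nx), ((a:ℕ)+(c:ℕ)+1 = nx) ↔ a = Fin.rev c := by
      intro a c; rw [Fin.ext_iff, Fin.val_rev]; omega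
    have hMJ : ∀ (M : Matrix (Fin nx) (Fin nx) ℂ) (r c : Fin nx),
        (M * J) r c = M r (Fin.rev c) := by
      intro M r c
      simp [hJ, mul_apply, hrev2, mul_ite]
    have hJEJ : J * E * J = Matrix.of fun (r c : Fin nx) =>
        (1 / h ^ 2) * ((d₁ * (if r = (⟨nx-1, by omega⟩ : Fin nx) then (1 : ℂ) else 0) +
          d₂ * (if r = (⟨nx-2, by omega⟩ : Fin nx) then (1 : ℂ) else 0)) *
          (if c = (⟨nx-1, by omega⟩ : Fin nx) then (1 : ℂ) else 0)) := by
      ext r c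
      rw [hMJ, hJM, hE]
      have e0 : ∀ r : Fin nx, (Fin.rev r = (⟨0, by omega⟩ : Fin nx)) ↔ r = ⟨nx-1, by omega⟩ := by
        intro r; rw [Fin.ext_iff, Fin.ext_iff, Fin.val_rev]; simp; omega
      have e1 : ∀ r : Fin nx, (Fin.rev r = (⟨1, by omega⟩ : Fin nx)) ↔ r = ⟨nx-2, by omega⟩ := by
        intro r; rw [Fin.ext_iff, Fin.ext_iff, Fin.val_rev]; simp; omega
      simp only [Matrix.of_apply, e0, e1]
    rw [← mulVec_mulVec, ← mulVec_mulVec]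
    have hu : C₂t *ᵥ vecOf X = Sum.elim
        (fun j => d₁ * X j ⟨0, by omega⟩ + d₂ * X j ⟨1, by omega⟩)
        (fun j => d₁ * X j ⟨nx-1, by omega⟩ + d₂ * X j ⟨nx-2, by omega⟩) := by
      funext s
      cases s <;>
      · simp only [hC₂t, mulVec, dotProduct, vecOf, Matrix.of_apply, Sum.elim_inl,
          Sum.elim_inr, Fintype.sum_prod_type]
        rw [Finset.sum_comm]
        simp [mul_ite, mul_zero, mul_add, ite_mul, zero_mul, mul_one,
          Finset.sum_ite_eq, Finset.sum_ite_eq', Finset.sum_add_distrib, mul_comm]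
    rw [hu]
    rw [show (Matrix.fromBlocks Pm⁻¹ 0 0 Pp⁻¹ *ᵥ Sum.elim
        (fun j => d₁ * X j ⟨0, by omega⟩ + d₂ * X j ⟨1, by omega⟩)
        (fun j => d₁ * X j ⟨nx-1, by omega⟩ + d₂ * X j ⟨nx-2, by omega⟩)) = Sum.elim
        (Pm⁻¹ *ᵥ fun j => d₁ * X j ⟨0, by omega⟩ + d₂ * X j ⟨1, by omega⟩)
        (Pp⁻¹ *ᵥ fun j => d₁ * X j ⟨nx-1, by omega⟩ + d₂ * X j ⟨nx-2, by omega⟩) by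
      simp [Matrix.fromBlocks_mulVec]]
    funext p
    obtain ⟨p1, p2⟩ := p
    simp only [hC₁, mulVec, dotProduct, Fintype.sum_sum_type, Matrix.of_apply, Sum.elim_inl,
      Sum.elim_inr, vecOf, Matrix.add_apply, ite_mul, zero_mul, one_mul, mul_ite, mul_zero,
      mul_one, Finset.sum_ite_eq, Finset.sum_ite_eq', Finset.mem_univ, if_true, Matrix.mul_assoc]
    have hXE : ∀ (j : Fin nz) (c : Fin nx), (X * E) j c =
        if c = ⟨0, by omega⟩ then 1/h^2 * (d₁ * X j ⟨0, by omega⟩ + d₂ * X j ⟨1, by omega⟩) else 0 := by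
      intro j c
      by_cases hc : c = ⟨0, by omega⟩ <;>
        simp [hE, mul_apply, hc, mul_add, mul_ite, mul_zero, mul_one, add_mul, ite_mul, zero_mul,
          Finset.sum_add_distrib, Finset.sum_ite_eq, Finset.sum_ite_eq'] <;> ring
    have hXF : ∀ (j : Fin nz) (c : Fin nx), (X * (J * (E * J))) j c =
        if c = ⟨nx-1, by omega⟩ then
          1/h^2 * (d₁ * X j ⟨nx-1, by omega⟩ + d₂ * X j ⟨nx-2, by omega⟩) else 0 := by
      intro j c
      rw [← Matrix.mul_assoc J E J, hJEJ]
      by_cases hc : c = ⟨nx-1, by omega⟩ <;>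
        simp [mul_apply, hc, mul_add, mul_ite, mul_zero, mul_one, add_mul, ite_mul, zero_mul,
          Finset.sum_add_distrib, Finset.sum_ite_eq, Finset.sum_ite_eq'] <;> ring
    have hA : (Pm⁻¹ * (X * E)) p2 p1 = if p1 = ⟨0, by omega⟩ then
        1/h^2 * ∑ x, Pm⁻¹ p2 x * (d₁ * X x ⟨0, by omega⟩ + d₂ * X x ⟨1, by omega⟩) else 0 := by
      rw [mul_apply]
      simp only [hXE, mul_ite, mul_zero]
      by_cases hp : p1 = ⟨0, by omega⟩ <;> simp [hp, Finset.mul_sum] <;>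
        exact Finset.sum_congr rfl fun _ _ => by ring
    have hB : (Pp⁻¹ * (X * (J * (E * J)))) p2 p1 = if p1 = ⟨nx-1, by omega⟩ then
        1/h^2 * ∑ x, Pp⁻¹ p2 x * (d₁ * X x ⟨nx-1, by omega⟩ + d₂ * X x ⟨nx-2, by omega⟩) else 0 := by
      rw [mul_apply]
      simp only [hXF, mul_ite, mul_zero]
      by_cases hp : p1 = ⟨nx-1, by omega⟩ <;> simp [hp, Finset.mul_sum] <;>
        exact Finset.sum_congr rfl fun _ _ => by ring
    rw [hA, hB]
  rw [sub_mulVec, hQ, hkey]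
  have hsub : ∀ (M N : Matrix (Fin nz) (Fin nx) ℂ), vecOf M - vecOf N = vecOf (M - N) :=
    fun _ _ => rfl
  rw [hsub]
  have hinj : ∀ (M N : Matrix (Fin nz) (Fin nx) ℂ), vecOf M = vecOf N ↔ M = N := by
    intro M N
    constructor
    · intro hmn; ext i j; exact congrFun hmn (j, i)
    · intro hmn; rw [hmn]
  rw [hinj]
  have hmain : (Dzz + (2 * σ) • Dz + σ ^ 2 • (1 : Matrix (Fin nz) (Fin nz) ℂ)) * X +
        X * Dxx + Matrix.hadamard K X - (Pm⁻¹ * X * E + Pp⁻¹ * X * (J * E * J)) =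
      (Dzz + (2 * σ) • Dz + (σ ^ 2 + kbar) • (1 : Matrix (Fin nz) (Fin nz) ℂ)) * X +
        X * Dxx + Matrix.hadamard (K - kbar • Matrix.of fun _ _ => (1 : ℂ)) X -
        Pm⁻¹ * X * E - Pp⁻¹ * X * (J * E * J) := by
    ext i j
    simp [Matrix.add_mul, Matrix.smul_mul, Matrix.one_mul, Matrix.hadamard_apply,
      Matrix.sub_apply, Matrix.add_apply, Matrix.smul_apply, Matrix.of_apply, smul_mul_assoc]
    ring
  rw [hmain]
end

section
/- Let L(X) = AX + XB be an invertible Sylvester operator on ℂ^{n×m} and Π(X) = Σ_{k=1}^N W_k(X)E_k. If X solves L(X) + Π(X) = C, then the vector a ∈ ℂ^N with a_k = W_k(X) satisfies W a = g, where W_{jk} = δ_{jk} + W_j(L^{-1}(E_k)) and g_j = W_j(L^{-1}(C)); moreover X = L^{-1}(C - Σ_k a_k E_k). -/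
open Matrix

/-- Converse direction of the Sylvester-type SMW theorem: if X solves
L(X) + Π(X) = C, then a with aₖ = Wₖ(X) satisfies W a = g and
X = L⁻¹(C - Σ aₖ Eₖ). -/
theorem sylvester_smw_converse (n m N : ℕ)
    (A : Matrix (Fin n) (Fin n) ℂ) (B : Matrix (Fin m) (Fin m) ℂ)
    (Linv : Matrix (Fin n) (Fin m) ℂ →ₗ[ℂ] Matrix (Fin n) (Fin m) ℂ)
    (hinv₁ : ∀ Y : Matrix (Fin n) (Fin m) ℂ, A * Linv Y + Linv Y * B = Y)
    (hinv₂ : ∀ X : Matrix (Fin n) (Fin m) ℂ, Linv (A * X + X * B) = X)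
    (Wf : Fin N → (Matrix (Fin n) (Fin m) ℂ →ₗ[ℂ] ℂ))
    (E : Fin N → Matrix (Fin n) (Fin m) ℂ)
    (C : Matrix (Fin n) (Fin m) ℂ)
    (Wmat : Matrix (Fin N) (Fin N) ℂ)
    (hWmat : ∀ j k, Wmat j k = (if j = k then (1 : ℂ) else 0) + Wf j (Linv (E k)))
    (X : Matrix (Fin n) (Fin m) ℂ)
    (hX : A * X + X * B + ∑ k, Wf k X • E k = C) :
    (Wmat *ᵥ fun k => Wf k X) = (fun j => Wf j (Linv C)) ∧
    X = Linv (C - ∑ k, Wf k X • E k) := by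
  have hXeq : X = Linv (C - ∑ k, Wf k X • E k) := by
    have h : A * X + X * B = C - ∑ k, Wf k X • E k := by
      rw [← hX, add_sub_cancel_right]
    rw [← h, hinv₂]
  refine ⟨?_, hXeq⟩
  funext j
  have hC : Linv C = X + ∑ k, Wf k X • Linv (E k) := by
    conv_lhs => rw [← hX]
    rw [map_add, hinv₂, map_sum]
    simp [LinearMap.map_smul]
  rw [hC]
  simp only [mulVec, dotProduct, hWmat, map_add, map_sum, LinearMap.map_smul,
    smul_eq_mul]
  simp only [add_mul, ite_mul, one_mul, zero_mul, Finset.sum_add_distrib]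
  congr 1
  · simp
  · exact Finset.sum_congr rfl fun k _ => mul_comm _ _
end
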